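/- Let x₀ ∈ (a,π/2), δ>0 with x₀+2δ<π/2, and η>0 with k²+3η < W(x₀+2δ). Then there exist constants C>0 and L>0 (depending only on M, k, a, x₀, δ, η) such that for every integer ℓ≥L and every twice continuously differentiable solution R:[a,π/2]→ℝ of the truncated 'Robin' Regge–Wheeler eigenvalue problem (−R″+V_ℓR=ω²R on [a,π/2], R(a)=0, −2ω²R(π/2)+(ℓ(ℓ+1)(ℓ(ℓ+1)−2)/(6M))R′(π/2)+k²ℓ(ℓ+1)R(π/2)=0) whose eigenvalue satisfies ω² ≤ (k²+η)ℓ(ℓ+1), the energy is exponentially small in the classically forbidden region: ∫ₐ^{x₀}( (R′)² + ℓ(ℓ+1)R² ) dx ≤ C e^{−ℓ/C} ∫ₐ^{π/2}( (R′)² + ℓ(ℓ+1)R² ) dx. -/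

import Mathlib

/- The truncated "Robin" Regge–Wheeler eigenvalue problem on [a, π/2]
   (tortoise coordinate, truncated at r = 3M). -/

noncomputable section

open Filter Topology Set

namespace RWradial

/-- `Δ(r) = r² + k²r⁴ − 2Mr`. -/
def Del (M k r : ℝ) : ℝ := r ^ 2 + k ^ 2 * r ^ 4 - 2 * M * r

/-- `R` (with derivative data `R'`, `R''`) is a twice continuously differentiable
solution of the truncated "Robin" Regge–Wheeler eigenvalue problem on `[a, π/2]`:
`−R″ + V R = ω²R`, `R(a) = 0`, and the higher order "Robin" condition at `π/2`. -/
def EVPsol (M k a : ℝ) (V : ℝ → ℝ) (ℓ : ℕ) (ω : ℝ) (R R' R'' : ℝ → ℝ) : Prop :=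
  (∀ x ∈ Set.Icc a (Real.pi / 2), HasDerivWithinAt R (R' x) (Set.Icc a (Real.pi / 2)) x) ∧
  (∀ x ∈ Set.Icc a (Real.pi / 2), HasDerivWithinAt R' (R'' x) (Set.Icc a (Real.pi / 2)) x) ∧
  ContinuousOn R'' (Set.Icc a (Real.pi / 2)) ∧
  (∀ x ∈ Set.Icc a (Real.pi / 2), -R'' x + V x * R x = ω ^ 2 * R x) ∧
  R a = 0 ∧
  (-2 * ω ^ 2 * R (Real.pi / 2)
    + ((ℓ : ℝ) * ((ℓ : ℝ) + 1) * ((ℓ : ℝ) * ((ℓ : ℝ) + 1) - 2) / (6 * M)) * R' (Real.pi / 2)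
    + k ^ 2 * ((ℓ : ℝ) * ((ℓ : ℝ) + 1)) * R (Real.pi / 2) = 0)

lemma no_pos_max {a b : ℝ} (hab : a < b) (w w' w'' : ℝ → ℝ)
    (hw : ∀ x ∈ Icc a b, HasDerivWithinAt w (w' x) (Icc a b) x)
    (hw' : ∀ x ∈ Icc a b, HasDerivWithinAt w' (w'' x) (Icc a b) x)
    (hsub : ∀ x ∈ Ioo a b, 0 < w x → 0 < w'' x)
    (hwa : w a ≤ 0) (hwb : w b ≤ 0) :
    ∀ x ∈ Icc a b, w x ≤ 0 := by
  by_contra hcon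
  push_neg at hcon
  obtain ⟨x₁, hx₁, hx₁pos⟩ := hcon
  have wcont : ContinuousOn w (Icc a b) := fun x hx => (hw x hx).continuousWithinAt
  obtain ⟨c, hcmem, hmax⟩ := isCompact_Icc.exists_isMaxOn ⟨a, left_mem_Icc.2 hab.le⟩ wcont
  have hwc : 0 < w c := lt_of_lt_of_le hx₁pos (hmax hx₁)
  have hca : a < c := by
    rcases lt_or_eq_of_le hcmem.1 with h | h
    · exact h
    · exact absurd (h ▸ hwc) (not_lt.2 hwa)
  have hcb : c < b := by
    rcases lt_or_eq_of_le hcmem.2 with h | h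
    · exact h
    · exact absurd (h ▸ hwc) (not_lt.2 hwb)
  have hcIoo : c ∈ Ioo a b := ⟨hca, hcb⟩
  have hnbhd : Icc a b ∈ 𝓝 c := Icc_mem_nhds hca hcb
  have hdw : HasDerivAt w (w' c) c := (hw c hcmem).hasDerivAt hnbhd
  have hdw' : HasDerivAt w' (w'' c) c := (hw' c hcmem).hasDerivAt hnbhd
  have hlm : IsLocalMax w c := hmax.isLocalMax hnbhd
  have hw'c : w' c = 0 := hlm.hasDerivAt_eq_zero hdw
  have hw''c : 0 < w'' c := hsub c hcIoo hwc
  -- w' is positive just to the right of c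
  have hslope : Tendsto (slope w' c) (𝓝[≠] c) (𝓝 (w'' c)) :=
    hasDerivAt_iff_tendsto_slope.1 hdw'
  have hev : ∀ᶠ x in 𝓝[>] c, 0 < w' x := by
    have h1 : ∀ᶠ x in 𝓝[≠] c, 0 < slope w' c x :=
      hslope.eventually (eventually_gt_nhds hw''c)
    have h2 : ∀ᶠ x in 𝓝[>] c, 0 < slope w' c x :=
      h1.filter_mono (nhdsWithin_mono c fun x hx => ne_of_gt hx)
    filter_upwards [h2, self_mem_nhdsWithin] with x hx hx'
    have hxc : 0 < x - c := sub_pos.2 hx'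
    rw [slope_def_field, div_pos_iff] at hx
    rcases hx with ⟨h, _⟩ | ⟨_, h⟩
    · rw [hw'c, sub_zero] at h; exact h
    · linarith
  have hmem : {x | 0 < w' x} ∩ Ioo c b ∈ 𝓝[>] c :=
    inter_mem hev (Ioo_mem_nhdsGT_of_mem ⟨le_refl c, hcb⟩)
  rw [mem_nhdsGT_iff_exists_Ioc_subset] at hmem
  obtain ⟨d', hd', hsub'⟩ := hmem
  -- pick d in (c, min d' b)
  have hd'c : c < d' := hd'
  set d : ℝ := min d' ((c + b) / 2) with hd
  have hdc : c < d := lt_min hd'c (by linarith)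
  have hdIoc : d ∈ Ioc c d' := ⟨hdc, min_le_left _ _⟩
  have hdmem := hsub' hdIoc
  have hdb : d < b := hdmem.2.2
  have hdab : d ∈ Icc a b := ⟨le_of_lt (lt_of_lt_of_le hca hdc.le), hdb.le⟩
  -- w strictly increasing on [c,d]
  have hmono : StrictMonoOn w (Icc c d) := by
    apply strictMonoOn_of_deriv_pos (convex_Icc c d)
    · exact wcont.mono (Icc_subset_Icc hcmem.1 hdab.2)
    · intro x hx
      rw [interior_Icc] at hx
      have hxIoc : x ∈ Ioc c d' := ⟨hx.1, le_trans hx.2.le (min_le_left _ _)⟩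
      have hxmem : x ∈ Icc a b := ⟨le_of_lt (hca.trans hx.1), (hsub' hxIoc).2.2.le⟩
      have : HasDerivAt w (w' x) x :=
        (hw x hxmem).hasDerivAt (Icc_mem_nhds (hca.trans hx.1) (hsub' hxIoc).2.2)
      rw [this.deriv]
      exact (hsub' hxIoc).1
  have : w c < w d := hmono (left_mem_Icc.2 hdc.le) (right_mem_Icc.2 hdc.le) hdc
  exact absurd (hmax hdab) (not_le.2 this)

lemma sinh_comparison {a b μ : ℝ} (hab : a < b) (hμ : 0 < μ)
    (R R' R'' q : ℝ → ℝ)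
    (hR : ∀ x ∈ Icc a b, HasDerivWithinAt R (R' x) (Icc a b) x)
    (hR' : ∀ x ∈ Icc a b, HasDerivWithinAt R' (R'' x) (Icc a b) x)
    (hode : ∀ x ∈ Icc a b, R'' x = q x * R x)
    (hq : ∀ x ∈ Icc a b, μ ^ 2 ≤ q x)
    (hRa : R a = 0) :
    ∀ x ∈ Icc a b, |R x| ≤ |R b| / Real.sinh (μ * (b - a)) * Real.sinh (μ * (x - a)) := by
  set m := |R b| with hm
  set S := Real.sinh (μ * (b - a)) with hSdef
  have hS : 0 < S := Real.sinh_pos_iff.2 (by nlinarith)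
  set v : ℝ → ℝ := fun x => m / S * Real.sinh (μ * (x - a)) with hv
  set v' : ℝ → ℝ := fun x => m / S * (μ * Real.cosh (μ * (x - a))) with hv'
  have hdv : ∀ x : ℝ, HasDerivAt v (v' x) x := by
    intro x
    have h1 : HasDerivAt (fun x : ℝ => μ * (x - a)) μ x := by
      simpa using (((hasDerivAt_id x).sub_const a).const_mul μ)
    have h2 : HasDerivAt (fun x : ℝ => Real.sinh (μ * (x - a)))
        (Real.cosh (μ * (x - a)) * μ) x := (Real.hasDerivAt_sinh _).comp x h1
    have := h2.const_mul (m / S)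
    refine this.congr_deriv ?_
    ring
  have hdv' : ∀ x : ℝ, HasDerivAt v' (μ ^ 2 * v x) x := by
    intro x
    have h1 : HasDerivAt (fun x : ℝ => μ * (x - a)) μ x := by
      simpa using (((hasDerivAt_id x).sub_const a).const_mul μ)
    have h2 : HasDerivAt (fun x : ℝ => Real.cosh (μ * (x - a)))
        (Real.sinh (μ * (x - a)) * μ) x := (Real.hasDerivAt_cosh _).comp x h1
    have := (h2.const_mul μ).const_mul (m / S)
    refine this.congr_deriv ?_
    simp only [hv]
    ring
  have hvnonneg : ∀ x ∈ Icc a b, 0 ≤ v x := by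
    intro x hx
    have : 0 ≤ Real.sinh (μ * (x - a)) := Real.sinh_nonneg_iff.2 (by nlinarith [hx.1])
    positivity
  have hva : v a = 0 := by simp [hv]
  have hvb : v b = m := by
    simp only [hv, ← hSdef]
    field_simp
  have key : ∀ (ε : ℝ), ε = 1 ∨ ε = -1 → ∀ x ∈ Icc a b, ε * R x - v x ≤ 0 := by
    intro ε hε
    have hε2 : ε ^ 2 = 1 := by rcases hε with h | h <;> rw [h] <;> ring
    apply no_pos_max hab (fun x => ε * R x - v x) (fun x => ε * R' x - v' x)
      (fun x => ε * R'' x - μ ^ 2 * v x)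
    · intro x hx
      exact ((hR x hx).const_mul ε).sub (hdv x).hasDerivWithinAt
    · intro x hx
      exact ((hR' x hx).const_mul ε).sub (hdv' x).hasDerivWithinAt
    · intro x hx hpos
      have hxm : x ∈ Icc a b := ⟨hx.1.le, hx.2.le⟩
      have h1 := hode x hxm
      have h2 := hq x hxm
      have h3 := hvnonneg x hxm
      have hεR : 0 < ε * R x := by nlinarith
      have : μ ^ 2 * (ε * R x) ≤ ε * R'' x := by
        rw [h1]
        rcases hε with h | h <;> rw [h] <;> nlinarith
      nlinarith [mul_pos (pow_pos hμ 2) hpos]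
    · rw [hRa, hva]; norm_num
    · rw [hvb]
      rcases hε with h | h <;> rw [h, hm]
      · simp [le_abs_self]
      · simp [neg_abs_le, neg_le, neg_neg]
        nlinarith [neg_abs_le (R b), abs_nonneg (R b)]
  intro x hx
  have h1 := key 1 (Or.inl rfl) x hx
  have h2 := key (-1) (Or.inr rfl) x hx
  simp only [one_mul, neg_one_mul] at h1 h2
  have hvx : v x = m / S * Real.sinh (μ * (x - a)) := rfl
  rw [abs_le, ← hvx]
  constructor <;> linarith

set_option maxHeartbeats 4000000 in
/-- Agmon estimate: the energy of eigenfunctions of the truncated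
"Robin" Regge–Wheeler eigenvalue problem with `ω² ≤ (k²+η)ℓ(ℓ+1)` is exponentially
small (in `ℓ`) in the classically forbidden region `[a, x₀]`. -/
theorem statement18
    (M k a : ℝ) (hM : 0 < M) (hk : 0 < k) (ha : a < Real.pi / 2)
    (ρ W : ℝ → ℝ) (V : ℕ → ℝ → ℝ)
    (hρa : ρ a = 3 * M)
    (hρge : ∀ x ∈ Set.Ico a (Real.pi / 2), 3 * M ≤ ρ x)
    (hρd : ∀ x ∈ Set.Ico a (Real.pi / 2),
      HasDerivWithinAt ρ (Del M k (ρ x) / (ρ x) ^ 2) (Set.Ico a (Real.pi / 2)) x)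
    (hρtop : Tendsto ρ (𝓝[<] (Real.pi / 2)) atTop)
    (hW : ∀ x ∈ Set.Ico a (Real.pi / 2), W x = Del M k (ρ x) / (ρ x) ^ 4)
    (hWend : W (Real.pi / 2) = k ^ 2)
    (hWcont : ContinuousOn W (Set.Icc a (Real.pi / 2)))
    (hWanti : StrictAntiOn W (Set.Icc a (Real.pi / 2)))
    (hV : ∀ ℓ : ℕ, 2 ≤ ℓ → ∀ x ∈ Set.Ico a (Real.pi / 2),
      V ℓ x = W x * ((ℓ : ℝ) * ((ℓ : ℝ) + 1) - 6 * M / ρ x))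
    (hVend : ∀ ℓ : ℕ, 2 ≤ ℓ → V ℓ (Real.pi / 2) = k ^ 2 * ((ℓ : ℝ) * ((ℓ : ℝ) + 1)))
    (hVcont : ∀ ℓ : ℕ, 2 ≤ ℓ → ContinuousOn (V ℓ) (Set.Icc a (Real.pi / 2)))
    (x₀ δ η : ℝ)
    (hx₀ : x₀ ∈ Set.Ioo a (Real.pi / 2)) (hδ : 0 < δ)
    (hx₀δ : x₀ + 2 * δ < Real.pi / 2)
    (hη : 0 < η) (hgap : k ^ 2 + 3 * η < W (x₀ + 2 * δ)) :
    ∃ C : ℝ, 0 < C ∧ ∃ L : ℕ, ∀ ℓ : ℕ, L ≤ ℓ →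
      ∀ (ω : ℝ) (R R' R'' : ℝ → ℝ),
        EVPsol M k a (V ℓ) ℓ ω R R' R'' →
        ω ^ 2 ≤ (k ^ 2 + η) * ((ℓ : ℝ) * ((ℓ : ℝ) + 1)) →
        (∫ x in a..x₀, ((R' x) ^ 2 + ((ℓ : ℝ) * ((ℓ : ℝ) + 1)) * (R x) ^ 2))
          ≤ C * Real.exp (-(ℓ : ℝ) / C) *
              (∫ x in a..(Real.pi / 2),
                ((R' x) ^ 2 + ((ℓ : ℝ) * ((ℓ : ℝ) + 1)) * (R x) ^ 2)) := by
  obtain ⟨hax₀, hx₀π⟩ := hx₀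
  set b := x₀ + 2 * δ with hbdef
  have hx₀b : x₀ < b := by simp only [hbdef]; linarith only [hδ]
  have hab : a < b := lt_trans hax₀ hx₀b
  have hbπ : b < Real.pi / 2 := hx₀δ
  have haπ : a ≤ Real.pi / 2 := ha.le
  have hbIcc : b ∈ Icc a (Real.pi / 2) := ⟨hab.le, hbπ.le⟩
  have haIcc : a ∈ Icc a (Real.pi / 2) := ⟨le_refl _, haπ⟩
  have hWb_pos : 0 < W b := lt_trans (by positivity) hgap
  have hWle : ∀ x ∈ Icc a b, W b ≤ W x ∧ W x ≤ W a := by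
    intro x hx
    have hxI : x ∈ Icc a (Real.pi / 2) := ⟨hx.1, le_trans hx.2 hbπ.le⟩
    exact ⟨(hWanti.le_iff_ge hbIcc hxI).mpr hx.2, (hWanti.le_iff_ge hxI haIcc).mpr hx.1⟩
  have hWa_pos : 0 < W a :=
    lt_of_lt_of_le hWb_pos (hWle a ⟨le_refl _, hab.le⟩).1
  have hsqη : 0 < Real.sqrt η := Real.sqrt_pos.2 hη
  set c := δ * Real.sqrt η with hcdef
  have hc : 0 < c := by positivity
  set c₃ := 1 / δ + 2 * δ * W a with hc₃def
  have hc₃ : 0 < c₃ := by positivity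
  set c₄ := (1 + 1 / η) * (2 * c₃) with hc₄def
  have hc₄ : 0 < c₄ := by positivity
  set C := max c₄ (1 / c) + 1 with hCdef
  have hC : 0 < C := by
    have h1 := le_max_right c₄ (1 / c)
    have h2 := one_div_pos.2 hc
    simp only [hCdef]; linarith only [h1, h2]
  have hCc₄ : c₄ ≤ C := by
    have := le_max_left c₄ (1 / c); simp only [hCdef]; linarith only [this]
  have hCc : 1 / C ≤ c := by
    have h1 : 1 / c ≤ C := by
      have := le_max_right c₄ (1 / c); simp only [hCdef]; linarith only [this]
    rw [div_le_iff₀ hC]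
    rw [div_le_iff₀ hc] at h1
    linarith only [h1]
  refine ⟨C, hC, ?_⟩
  -- conditions defining L
  have hev1 : ∀ᶠ ℓ : ℕ in atTop, 2 ≤ ℓ := eventually_ge_atTop 2
  have hev2 : ∀ᶠ ℓ : ℕ in atTop,
      2 * (k ^ 2 + 3 * η) ≤ η * ((ℓ : ℝ) * ((ℓ : ℝ) + 1)) := by
    obtain ⟨N, hN⟩ := exists_nat_ge (2 * (k ^ 2 + 3 * η) / η)
    filter_upwards [eventually_ge_atTop (max N 1)] with ℓ hℓ
    have h1 : (N : ℝ) ≤ (ℓ : ℝ) := by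
      exact_mod_cast le_trans (le_max_left N 1) hℓ
    have h2 : (1 : ℝ) ≤ (ℓ : ℝ) := by
      exact_mod_cast le_trans (le_max_right N 1) hℓ
    rw [div_le_iff₀ hη] at hN
    have h3 := mul_le_mul_of_nonneg_left h1 hη.le
    have h4 : 0 ≤ η * (ℓ:ℝ)^2 := by positivity
    linarith only [hN, h3, h4]
  have hev3 : ∀ᶠ ℓ : ℕ in atTop, 1 ≤ 2 * δ * (Real.sqrt η * (ℓ : ℝ)) := by
    obtain ⟨N, hN⟩ := exists_nat_ge (1 / (2 * δ * Real.sqrt η))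
    filter_upwards [eventually_ge_atTop N] with ℓ hℓ
    have h1 : (N : ℝ) ≤ (ℓ : ℝ) := by exact_mod_cast hℓ
    have h4 : 1 / (2 * δ * Real.sqrt η) ≤ (ℓ:ℝ) := le_trans hN h1
    rw [div_le_iff₀ (by positivity)] at h4
    linarith only [h4]
  have hev4 : ∀ᶠ ℓ : ℕ in atTop,
      (ℓ : ℝ) * ((ℓ : ℝ) + 1) ≤ Real.exp (c * (ℓ : ℝ)) := by
    have t1 : Tendsto (fun x : ℝ => x ^ 3 * Real.exp (-x)) atTop (𝓝 0) :=
      Real.tendsto_pow_mul_exp_neg_atTop_nhds_zero 3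
    have t2 : Tendsto (fun ℓ : ℕ => c * (ℓ : ℝ)) atTop atTop :=
      (tendsto_natCast_atTop_atTop (R := ℝ)).const_mul_atTop hc
    have t3 := t1.comp t2
    have hevlt := t3.eventually (gt_mem_nhds (show (0 : ℝ) < c ^ 3 by positivity))
    filter_upwards [hevlt, eventually_ge_atTop 2] with ℓ h1 h2
    simp only [Function.comp_apply] at h1
    have h2' : (2 : ℝ) ≤ (ℓ : ℝ) := by exact_mod_cast h2
    have hexp_pos : 0 < Real.exp (c * (ℓ : ℝ)) := Real.exp_pos _
    rw [Real.exp_neg, mul_inv_lt_iff₀ hexp_pos] at h1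
    have hc3 : 0 < c ^ 3 := by positivity
    have h3 : (ℓ : ℝ) ^ 3 ≤ Real.exp (c * (ℓ : ℝ)) := by
      by_contra hcon
      push_neg at hcon
      have h5 := mul_lt_mul_of_pos_left hcon hc3
      linarith only [h1, h5]
    have h4 : (0:ℝ) ≤ (ℓ : ℝ) := by positivity
    nlinarith only [h3, h2', h4, mul_nonneg (mul_nonneg h4 h4) h4,
      mul_nonneg (sub_nonneg.2 h2') (mul_nonneg h4 h4), mul_nonneg (sub_nonneg.2 h2') h4]
  obtain ⟨L, hL⟩ := eventually_atTop.1 (hev1.and (hev2.and (hev3.and hev4)))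
  refine ⟨L, ?_⟩
  intro ℓ hℓ ω R R' R'' hsol hω
  obtain ⟨h2ℓ, hlamcond, hμcond, hexpcond⟩ := hL ℓ hℓ
  set lam := (ℓ : ℝ) * ((ℓ : ℝ) + 1) with hlamdef
  have h2ℓ' : (2 : ℝ) ≤ (ℓ : ℝ) := by exact_mod_cast h2ℓ
  have hlam6 : 6 ≤ lam := by simp only [hlamdef]; nlinarith only [h2ℓ']
  have hlam1 : 1 ≤ lam := by linarith only [hlam6]
  have hlamsq : (ℓ : ℝ) ^ 2 ≤ lam := by simp only [hlamdef]; nlinarith only [h2ℓ']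
  have hlampos : 0 < lam := by linarith only [hlam1]
  set μ := Real.sqrt (η * lam) with hμdef
  have hμsq : μ ^ 2 = η * lam := Real.sq_sqrt (by positivity)
  have hμpos : 0 < μ := Real.sqrt_pos.2 (by positivity)
  have hμge : Real.sqrt η * (ℓ : ℝ) ≤ μ := by
    have h1 : η * (ℓ : ℝ) ^ 2 ≤ η * lam := mul_le_mul_of_nonneg_left hlamsq hη.le
    have h2 := Real.sqrt_le_sqrt h1
    rwa [Real.sqrt_mul hη.le, Real.sqrt_sq (by positivity : (0:ℝ) ≤ (ℓ:ℝ))] at h2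
  have h2δμ : 1 ≤ 2 * δ * μ := by
    refine le_trans hμcond ?_
    have := mul_le_mul_of_nonneg_left hμge (by positivity : (0:ℝ) ≤ 2 * δ)
    linarith only [this]
  obtain ⟨hdR, hdR', hR''cont, hODE, hRa0, -⟩ := hsol
  have hRcont : ContinuousOn R (Icc a (Real.pi / 2)) :=
    fun x hx => (hdR x hx).continuousWithinAt
  have hR'cont : ContinuousOn R' (Icc a (Real.pi / 2)) :=
    fun x hx => (hdR' x hx).continuousWithinAt
  set q : ℝ → ℝ := fun x => V ℓ x - ω ^ 2 with hqdef
  have hODE' : ∀ x ∈ Icc a (Real.pi / 2), R'' x = q x * R x := by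
    intro x hx
    have h := hODE x hx
    simp only [hqdef]
    linarith only [h]
  have hωnn : 0 ≤ ω ^ 2 := sq_nonneg ω
  have hq_bounds : ∀ x ∈ Icc a b, η * lam ≤ q x ∧ q x ≤ W a * lam := by
    intro x hx
    have hxI : x ∈ Ico a (Real.pi / 2) := ⟨hx.1, lt_of_le_of_lt hx.2 hbπ⟩
    have hVx := hV ℓ h2ℓ x hxI
    have hρx := hρge x hxI
    have hρpos : 0 < ρ x := lt_of_lt_of_le (by linarith only [hM]) hρx
    have h6M : 6 * M / ρ x ≤ 2 := by rw [div_le_iff₀ hρpos]; linarith only [hρx, hM]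
    have h6Mpos : 0 ≤ 6 * M / ρ x := by positivity
    obtain ⟨hW1, hW2⟩ := hWle x hx
    have hWxpos : 0 < W x := lt_of_lt_of_le hWb_pos hW1
    constructor
    · have hVlb : W b * (lam - 2) ≤ V ℓ x := by
        rw [hVx]
        calc W b * (lam - 2) ≤ W x * (lam - 2) :=
              mul_le_mul_of_nonneg_right hW1 (by linarith only [hlam6])
          _ ≤ W x * (lam - 6 * M / ρ x) :=
              mul_le_mul_of_nonneg_left (by linarith only [h6M]) hWxpos.le
      simp only [hqdef]
      have p1 : (k ^ 2 + 3 * η) * (lam - 2) ≤ W b * (lam - 2) :=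
        mul_le_mul_of_nonneg_right hgap.le (by linarith only [hlam6])
      linarith only [p1, hVlb, hω, hlamcond]
    · have hVub : V ℓ x ≤ W a * lam := by
        rw [hVx]
        calc W x * (lam - 6 * M / ρ x) ≤ W x * lam :=
              mul_le_mul_of_nonneg_left (by linarith only [h6Mpos]) hWxpos.le
          _ ≤ W a * lam := mul_le_mul_of_nonneg_right hW2 hlampos.le
      simp only [hqdef]
      linarith only [hVub, hωnn]
  have hIccb : Icc a b ⊆ Icc a (Real.pi / 2) := Icc_subset_Icc_right hbπ.le
  have hdRb : ∀ x ∈ Icc a b, HasDerivWithinAt R (R' x) (Icc a b) x :=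
    fun x hx => (hdR x (hIccb hx)).mono hIccb
  have hdR'b : ∀ x ∈ Icc a b, HasDerivWithinAt R' (R'' x) (Icc a b) x :=
    fun x hx => (hdR' x (hIccb hx)).mono hIccb
  have hcomp := sinh_comparison hab hμpos R R' R'' q hdRb hdR'b
    (fun x hx => hODE' x (hIccb hx))
    (fun x hx => hμsq ▸ (hq_bounds x hx).1) hRa0
  set m := |R b| with hmdef
  have hm0 : 0 ≤ m := abs_nonneg _
  set S := Real.sinh (μ * (b - a)) with hSdef
  have hS : 0 < S := Real.sinh_pos_iff.2 (mul_pos hμpos (by linarith only [hab]))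
  have hRle_m : ∀ x ∈ Icc a b, |R x| ≤ m := by
    intro x hx
    refine (hcomp x hx).trans ?_
    have h1 : Real.sinh (μ * (x - a)) ≤ S :=
      Real.sinh_le_sinh.2 (mul_le_mul_of_nonneg_left (by linarith only [hx.2]) hμpos.le)
    calc m / S * Real.sinh (μ * (x - a)) ≤ m / S * S :=
          mul_le_mul_of_nonneg_left h1 (by positivity)
      _ = m := div_mul_cancel₀ m hS.ne'
  have hRx₀ : |R x₀| ≤ 2 * Real.exp (-(2 * δ * μ)) * m := by
    refine (hcomp x₀ ⟨hax₀.le, hx₀b.le⟩).trans ?_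
    have hX : Real.sinh (μ * (x₀ - a)) ≤ Real.exp (μ * (x₀ - a)) / 2 := by
      rw [Real.sinh_eq]
      have := Real.exp_pos (-(μ * (x₀ - a)))
      linarith only [this]
    have hY1 : 1 ≤ μ * (b - a) := by
      have e : μ * (2 * δ) ≤ μ * (b - a) :=
        mul_le_mul_of_nonneg_left (by linarith only [hbdef, hax₀]) hμpos.le
      linarith only [h2δμ, e]
    have hY : Real.exp (μ * (b - a)) / 4 ≤ S := by
      rw [hSdef, Real.sinh_eq]
      have h2 : Real.exp 1 ≤ Real.exp (μ * (b - a)) := Real.exp_le_exp.2 hY1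
      have h3 : (2 : ℝ) ≤ Real.exp 1 := by
        have := Real.add_one_le_exp (1 : ℝ); linarith only [this]
      have h5 : Real.exp (-(μ * (b - a))) ≤ 1 := by
        rw [Real.exp_le_one_iff]; linarith only [hY1]
      linarith only [h2, h3, h5]
    have hkey : Real.sinh (μ * (x₀ - a)) / S ≤ 2 * Real.exp (-(2 * δ * μ)) := by
      have h5 := div_le_div₀ (by positivity : (0:ℝ) ≤ Real.exp (μ * (x₀ - a)) / 2) hX
        (by positivity : (0:ℝ) < Real.exp (μ * (b - a)) / 4) hY
      refine h5.trans_eq ?_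
      have hsub : μ * (x₀ - a) - μ * (b - a) = -(2 * δ * μ) := by
        simp only [hbdef]; ring
      rw [div_div_div_comm, ← Real.exp_sub, hsub]
      norm_num
      ring
    calc m / S * Real.sinh (μ * (x₀ - a))
        = m * (Real.sinh (μ * (x₀ - a)) / S) := by ring
      _ ≤ m * (2 * Real.exp (-(2 * δ * μ))) :=
          mul_le_mul_of_nonneg_left hkey hm0
      _ = 2 * Real.exp (-(2 * δ * μ)) * m := by ring
  -- interior derivatives
  have hdRAt : ∀ x ∈ Ioo a (Real.pi / 2), HasDerivAt R (R' x) x := fun x hx =>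
    (hdR x ⟨hx.1.le, hx.2.le⟩).hasDerivAt (Icc_mem_nhds hx.1 hx.2)
  have hdR'At : ∀ x ∈ Ioo a (Real.pi / 2), HasDerivAt R' (R'' x) x := fun x hx =>
    (hdR' x ⟨hx.1.le, hx.2.le⟩).hasDerivAt (Icc_mem_nhds hx.1 hx.2)
  -- energy integrand
  have hFcont : ContinuousOn (fun x => R' x ^ 2 + lam * R x ^ 2) (Icc a (Real.pi / 2)) :=
    (hR'cont.pow 2).add (continuousOn_const.mul (hRcont.pow 2))
  have hFnonneg : ∀ x, 0 ≤ R' x ^ 2 + lam * R x ^ 2 := fun x =>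
    add_nonneg (sq_nonneg _) (mul_nonneg hlampos.le (sq_nonneg _))
  have hFint : IntervalIntegrable (fun x => R' x ^ 2 + lam * R x ^ 2) MeasureTheory.volume a (Real.pi / 2) := by
    apply ContinuousOn.intervalIntegrable
    rwa [uIcc_of_le haπ]
  have hFint_ab : IntervalIntegrable (fun x => R' x ^ 2 + lam * R x ^ 2) MeasureTheory.volume a b := by
    apply ContinuousOn.intervalIntegrable
    rw [uIcc_of_le hab.le]
    exact hFcont.mono hIccb
  set E := ∫ x in a..(Real.pi / 2), (R' x ^ 2 + lam * R x ^ 2) with hEdef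
  have hEnonneg : 0 ≤ E :=
    intervalIntegral.integral_nonneg haπ (fun x _ => hFnonneg x)
  have hEb : (∫ x in a..b, (R' x ^ 2 + lam * R x ^ 2)) ≤ E := by
    have hsplit : (∫ x in a..b, (R' x ^ 2 + lam * R x ^ 2))
        + (∫ x in b..(Real.pi / 2), (R' x ^ 2 + lam * R x ^ 2)) = E :=
      intervalIntegral.integral_add_adjacent_intervals hFint_ab
        (by
          apply ContinuousOn.intervalIntegrable
          rw [uIcc_of_le hbπ.le]
          exact hFcont.mono (Icc_subset_Icc hab.le le_rfl))
    have h2 : 0 ≤ ∫ x in b..(Real.pi / 2), (R' x ^ 2 + lam * R x ^ 2) :=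
      intervalIntegral.integral_nonneg hbπ.le (fun x _ => hFnonneg x)
    linarith only [hsplit, h2]
  -- m² ≤ E
  have hm2E : m ^ 2 ≤ E := by
    have hftc : (∫ x in a..b, 2 * R x * R' x) = R b ^ 2 - R a ^ 2 := by
      apply intervalIntegral.integral_eq_sub_of_hasDeriv_right_of_le
        (f := fun x => R x ^ 2) (f' := fun x => 2 * R x * R' x) hab.le
      · exact (hRcont.mono hIccb).pow 2
      · intro x hx
        have hxI : x ∈ Ioo a (Real.pi / 2) := ⟨hx.1, lt_trans hx.2 hbπ⟩
        have h2 : HasDerivAt (fun y => R y ^ 2) (2 * R x * R' x) x := by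
          have h3 := (hdRAt x hxI).pow 2
          refine h3.congr_deriv ?_
          push_cast
          ring
        exact h2.hasDerivWithinAt
      · apply ContinuousOn.intervalIntegrable
        rw [uIcc_of_le hab.le]
        exact (continuousOn_const.mul (hRcont.mono hIccb)).mul (hR'cont.mono hIccb)
    have hmono : (∫ x in a..b, 2 * R x * R' x)
        ≤ ∫ x in a..b, (R' x ^ 2 + lam * R x ^ 2) := by
      apply intervalIntegral.integral_mono_on hab.le _ hFint_ab
      · intro x hx
        have e : R x ^ 2 ≤ lam * R x ^ 2 := le_mul_of_one_le_left (sq_nonneg _) hlam1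
        linarith only [sq_nonneg (R x - R' x), e]
      · apply ContinuousOn.intervalIntegrable
        rw [uIcc_of_le hab.le]
        exact (continuousOn_const.mul (hRcont.mono hIccb)).mul (hR'cont.mono hIccb)
    rw [hRa0] at hftc
    have hsq : m ^ 2 = R b ^ 2 := sq_abs _
    have hz : (0:ℝ) ^ 2 = 0 := by norm_num
    linarith only [hftc, hmono, hEb, hsq, hz]
  -- MVT point ζ
  obtain ⟨ζ, hζ, hζeq⟩ := exists_hasDerivAt_eq_slope R R' hx₀b
    (hRcont.mono (Icc_subset_Icc hax₀.le hbπ.le))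
    (fun x hx => hdRAt x ⟨lt_trans hax₀ hx.1, lt_trans hx.2 hbπ⟩)
  have hζIcc : ζ ∈ Icc a b := ⟨le_trans hax₀.le hζ.1.le, hζ.2.le⟩
  have hbx₀ : b - x₀ = 2 * δ := by simp only [hbdef]; ring
  have hRζ : |R' ζ| ≤ m / δ := by
    rw [hζeq, hbx₀, abs_div]
    have h1 : |R b - R x₀| ≤ 2 * m := by
      have h2 := hRle_m x₀ ⟨hax₀.le, hx₀b.le⟩
      calc |R b - R x₀| ≤ |R b| + |R x₀| := abs_sub _ _
        _ ≤ 2 * m := by rw [← hmdef]; linarith only [h2]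
    rw [abs_of_pos (by linarith only [hδ] : (0:ℝ) < 2 * δ)]
    rw [div_le_div_iff₀ (by linarith only [hδ]) hδ]
    have e := mul_le_mul_of_nonneg_right h1 hδ.le
    linarith only [e]
  -- bound on |R''| on [a,b]
  have hqabs : ∀ x ∈ Icc a b, |R'' x| ≤ W a * lam * m := by
    intro x hx
    rw [hODE' x (hIccb hx), abs_mul]
    obtain ⟨hq1, hq2⟩ := hq_bounds x hx
    have hqnn : 0 ≤ q x := le_trans (by positivity) hq1
    rw [abs_of_nonneg hqnn]
    exact mul_le_mul hq2 (hRle_m x hx) (abs_nonneg _) (by positivity)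
  have hFTC2 : (∫ x in x₀..ζ, R'' x) = R' ζ - R' x₀ := by
    apply intervalIntegral.integral_eq_sub_of_hasDeriv_right_of_le hζ.1.le
    · exact hR'cont.mono (Icc_subset_Icc hax₀.le (le_trans hζ.2.le hbπ.le))
    · intro x hx
      exact (hdR'At x ⟨lt_trans hax₀ hx.1, lt_trans (lt_trans hx.2 hζ.2) hbπ⟩).hasDerivWithinAt
    · apply ContinuousOn.intervalIntegrable
      rw [uIcc_of_le hζ.1.le]
      exact hR''cont.mono (Icc_subset_Icc hax₀.le (le_trans hζ.2.le hbπ.le))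
  have hintbnd : |∫ x in x₀..ζ, R'' x| ≤ (W a * lam * m) * |ζ - x₀| := by
    have hb1 : ∀ x ∈ Set.uIoc x₀ ζ, ‖R'' x‖ ≤ W a * lam * m := by
      intro x hx
      rw [uIoc_of_le hζ.1.le] at hx
      rw [Real.norm_eq_abs]
      exact hqabs x ⟨le_trans hax₀.le hx.1.le, le_trans hx.2 hζ.2.le⟩
    have h2 := intervalIntegral.norm_integral_le_of_norm_le_const hb1
    rwa [Real.norm_eq_abs] at h2
  have hζx₀ : |ζ - x₀| ≤ 2 * δ := by
    rw [abs_of_nonneg (by linarith only [hζ.1.le])]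
    have := hζ.2.le
    linarith only [this, hbx₀]
  have hR'x₀ : |R' x₀| ≤ c₃ * lam * m := by
    have h1 : |R' x₀| ≤ |R' ζ| + |∫ x in x₀..ζ, R'' x| := by
      have h0 : R' x₀ = R' ζ - ∫ x in x₀..ζ, R'' x := by linarith only [hFTC2]
      rw [h0]
      exact abs_sub _ _
    have h2 : |∫ x in x₀..ζ, R'' x| ≤ W a * lam * m * (2 * δ) :=
      le_trans hintbnd (mul_le_mul_of_nonneg_left hζx₀ (by positivity))
    have h3 : |R' x₀| ≤ m / δ + W a * lam * m * (2 * δ) := by linarith only [hRζ, h1, h2]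
    refine h3.trans ?_
    have e0 : m ≤ lam * m := le_mul_of_one_le_left hm0 hlam1
    have e1 : m / δ ≤ 1 / δ * (lam * m) := by
      rw [div_eq_mul_inv, one_div, mul_comm]
      exact mul_le_mul_of_nonneg_left e0 (by positivity)
    simp only [hc₃def]
    linarith only [e1]
  -- energy identity on [a, x₀]
  have hax₀Icc : Icc a x₀ ⊆ Icc a (Real.pi / 2) := Icc_subset_Icc_right hx₀π.le
  have hax₀b : Icc a x₀ ⊆ Icc a b := Icc_subset_Icc_right hx₀b.le
  have hint1 : IntervalIntegrable (fun x => R' x ^ 2) MeasureTheory.volume a x₀ := by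
    apply ContinuousOn.intervalIntegrable
    rw [uIcc_of_le hax₀.le]
    exact (hR'cont.mono hax₀Icc).pow 2
  have hint2 : IntervalIntegrable (fun x => R x * R'' x) MeasureTheory.volume a x₀ := by
    apply ContinuousOn.intervalIntegrable
    rw [uIcc_of_le hax₀.le]
    exact (hRcont.mono hax₀Icc).mul (hR''cont.mono hax₀Icc)
  have hint3 : IntervalIntegrable (fun x => lam * R x ^ 2) MeasureTheory.volume a x₀ := by
    apply ContinuousOn.intervalIntegrable
    rw [uIcc_of_le hax₀.le]
    exact continuousOn_const.mul ((hRcont.mono hax₀Icc).pow 2)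
  have hftc3 : (∫ x in a..x₀, (R' x ^ 2 + R x * R'' x)) = R x₀ * R' x₀ := by
    have h := intervalIntegral.integral_eq_sub_of_hasDeriv_right_of_le hax₀.le
      (f := fun x => R x * R' x) (f' := fun x => R' x ^ 2 + R x * R'' x)
      ((hRcont.mono hax₀Icc).mul (hR'cont.mono hax₀Icc))
      (fun x hx => by
        have hxI : x ∈ Ioo a (Real.pi / 2) := ⟨hx.1, lt_trans hx.2 hx₀π⟩
        have h2 : HasDerivAt (fun y => R y * R' y) (R' x ^ 2 + R x * R'' x) x := by
          have h3 := (hdRAt x hxI).mul (hdR'At x hxI)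
          refine h3.congr_deriv ?_
          ring
        exact h2.hasDerivWithinAt)
      (by
        apply ContinuousOn.intervalIntegrable
        rw [uIcc_of_le hax₀.le]
        exact ((hR'cont.mono hax₀Icc).pow 2).add
          ((hRcont.mono hax₀Icc).mul (hR''cont.mono hax₀Icc)))
    rw [h]
    simp only [hRa0]
    ring
  have hcong : (∫ x in a..x₀, R x * R'' x) = ∫ x in a..x₀, q x * R x ^ 2 := by
    apply intervalIntegral.integral_congr
    intro x hx
    rw [uIcc_of_le hax₀.le] at hx
    show R x * R'' x = q x * R x ^ 2
    rw [hODE' x (hax₀Icc hx)]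
    ring
  have hint2' : IntervalIntegrable (fun x => q x * R x ^ 2) MeasureTheory.volume a x₀ := by
    apply ContinuousOn.intervalIntegrable
    rw [uIcc_of_le hax₀.le]
    exact (((hVcont ℓ h2ℓ).sub continuousOn_const).mono hax₀Icc).mul ((hRcont.mono hax₀Icc).pow 2)
  have hsplit3 : (∫ x in a..x₀, (R' x ^ 2 + R x * R'' x))
      = (∫ x in a..x₀, R' x ^ 2) + (∫ x in a..x₀, R x * R'' x) :=
    intervalIntegral.integral_add hint1 hint2
  have hnn1 : 0 ≤ ∫ x in a..x₀, R' x ^ 2 :=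
    intervalIntegral.integral_nonneg hax₀.le (fun x _ => sq_nonneg _)
  have hnn2 : 0 ≤ ∫ x in a..x₀, q x * R x ^ 2 := by
    apply intervalIntegral.integral_nonneg hax₀.le
    intro x hx
    have hq1 := (hq_bounds x (hax₀b hx)).1
    exact mul_nonneg (le_trans (by positivity) hq1) (sq_nonneg _)
  have hPsum : (∫ x in a..x₀, R' x ^ 2) + (∫ x in a..x₀, q x * R x ^ 2) = R x₀ * R' x₀ := by
    rw [← hcong, ← hsplit3, hftc3]
  set P := R x₀ * R' x₀ with hPdef
  have hPnn : 0 ≤ P := by linarith only [hnn1, hnn2, hPsum]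
  have hle1 : (∫ x in a..x₀, R' x ^ 2) ≤ P := by linarith only [hnn2, hPsum]
  have hle2 : (∫ x in a..x₀, q x * R x ^ 2) ≤ P := by linarith only [hnn1, hPsum]
  have hmono2 : (∫ x in a..x₀, lam * R x ^ 2) ≤ (1 / η) * ∫ x in a..x₀, q x * R x ^ 2 := by
    rw [← intervalIntegral.integral_const_mul]
    apply intervalIntegral.integral_mono_on hax₀.le hint3 (hint2'.const_mul (1 / η))
    intro x hx
    have hq1 := (hq_bounds x (hax₀b hx)).1
    have h1 : η * lam * R x ^ 2 ≤ q x * R x ^ 2 :=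
      mul_le_mul_of_nonneg_right hq1 (sq_nonneg _)
    have h2 : lam * R x ^ 2 = 1 / η * (η * lam * R x ^ 2) := by
      field_simp
    rw [h2]
    exact mul_le_mul_of_nonneg_left h1 (by positivity)
  have hsplitF : (∫ x in a..x₀, (R' x ^ 2 + lam * R x ^ 2))
      = (∫ x in a..x₀, R' x ^ 2) + (∫ x in a..x₀, lam * R x ^ 2) :=
    intervalIntegral.integral_add hint1 hint3
  have hchain1 : (∫ x in a..x₀, (R' x ^ 2 + lam * R x ^ 2)) ≤ (1 + 1 / η) * P := by
    rw [hsplitF]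
    have h1 : (1 / η) * (∫ x in a..x₀, q x * R x ^ 2) ≤ (1 / η) * P :=
      mul_le_mul_of_nonneg_left hle2 (by positivity)
    linarith only [hmono2, hle1, h1]
  have hPbound : P ≤ |R x₀| * |R' x₀| := by
    rw [hPdef, ← abs_mul]
    exact le_abs_self _
  have habs2 : |R x₀| * |R' x₀| ≤ (2 * Real.exp (-(2 * δ * μ)) * m) * (c₃ * lam * m) :=
    mul_le_mul hRx₀ hR'x₀ (abs_nonneg _) (by positivity)
  have hchain2 : (1 + 1 / η) * P ≤ c₄ * (lam * Real.exp (-(2 * δ * μ)) * m ^ 2) := by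
    calc (1 + 1 / η) * P
        ≤ (1 + 1 / η) * ((2 * Real.exp (-(2 * δ * μ)) * m) * (c₃ * lam * m)) :=
          mul_le_mul_of_nonneg_left (le_trans hPbound habs2) (by positivity)
      _ = c₄ * (lam * Real.exp (-(2 * δ * μ)) * m ^ 2) := by
          simp only [hc₄def]; ring
  have hexp1 : Real.exp (-(2 * δ * μ)) ≤ Real.exp (-(2 * (c * (ℓ : ℝ)))) := by
    apply Real.exp_le_exp.2
    simp only [hcdef]
    have e := mul_le_mul_of_nonneg_left hμge hδ.le
    linarith only [e]
  have hlamexp : lam * Real.exp (-(2 * δ * μ)) ≤ Real.exp (-(c * (ℓ : ℝ))) := by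
    calc lam * Real.exp (-(2 * δ * μ))
        ≤ Real.exp (c * (ℓ : ℝ)) * Real.exp (-(2 * (c * (ℓ : ℝ)))) :=
          mul_le_mul hexpcond hexp1 (Real.exp_pos _).le (Real.exp_pos _).le
      _ = Real.exp (-(c * (ℓ : ℝ))) := by rw [← Real.exp_add]; ring_nf
  have hfinal1 : (∫ x in a..x₀, (R' x ^ 2 + lam * R x ^ 2))
      ≤ c₄ * Real.exp (-(c * (ℓ : ℝ))) * E := by
    have h1 : c₄ * (lam * Real.exp (-(2 * δ * μ)) * m ^ 2)
        ≤ c₄ * (Real.exp (-(c * (ℓ : ℝ))) * m ^ 2) :=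
      mul_le_mul_of_nonneg_left
        (mul_le_mul_of_nonneg_right hlamexp (sq_nonneg m)) hc₄.le
    have h2 : c₄ * (Real.exp (-(c * (ℓ : ℝ))) * m ^ 2)
        ≤ c₄ * (Real.exp (-(c * (ℓ : ℝ))) * E) :=
      mul_le_mul_of_nonneg_left
        (mul_le_mul_of_nonneg_left hm2E (Real.exp_pos _).le) hc₄.le
    calc (∫ x in a..x₀, (R' x ^ 2 + lam * R x ^ 2)) ≤ (1 + 1 / η) * P := hchain1
      _ ≤ c₄ * (lam * Real.exp (-(2 * δ * μ)) * m ^ 2) := hchain2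
      _ ≤ c₄ * (Real.exp (-(c * (ℓ : ℝ))) * m ^ 2) := h1
      _ ≤ c₄ * (Real.exp (-(c * (ℓ : ℝ))) * E) := h2
      _ = c₄ * Real.exp (-(c * (ℓ : ℝ))) * E := by ring
  have hexp2 : Real.exp (-(c * (ℓ : ℝ))) ≤ Real.exp (-(ℓ : ℝ) / C) := by
    apply Real.exp_le_exp.2
    have hℓnn : (0:ℝ) ≤ (ℓ : ℝ) := by positivity
    have h1 : (1 / C) * (ℓ : ℝ) ≤ c * (ℓ : ℝ) :=
      mul_le_mul_of_nonneg_right hCc hℓnn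
    rw [neg_div]
    have : (ℓ : ℝ) / C = (1 / C) * (ℓ : ℝ) := by ring
    rw [this]
    linarith only [h1]
  refine hfinal1.trans ?_
  have hcoef : c₄ * Real.exp (-(c * (ℓ : ℝ))) ≤ C * Real.exp (-(ℓ : ℝ) / C) :=
    mul_le_mul hCc₄ hexp2 (Real.exp_pos _).le hC.le
  exact mul_le_mul_of_nonneg_right hcoef hEnonneg


end RWradial
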